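/- Let X be a k-regular graph on n vertices possibly with loops, and τ the least eigenvalue of its adjacency matrix. If S is an independent set of size s containing s_1 looped vertices, then s ≤ n·(−τ + sqrt(τ² + 4·s_1·(k−τ)/n)) / (2(k−τ)), provided k > τ. -/

import Mathlib

open Matrix Finset

/-- Ratio-type bound for `k`-regular graphs with loops: if `S` is an independent set of
size `s` containing `s₁` looped vertices then
`s ≤ n·(−τ + √(τ² + 4 s₁ (k−τ)/n)) / (2 (k−τ))`. -/
theorem stmt3 (n k : ℕ) (hn : 0 < n)
    (A : Matrix (Fin n) (Fin n) ℝ) (hsym : A.IsSymm)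
    (h01 : ∀ i j, A i j = 0 ∨ A i j = 1)
    (hreg : ∀ i, ∑ j, A i j = k)
    (τ : ℝ)
    (hτeig : ∃ v : Fin n → ℝ, v ≠ 0 ∧ A.mulVec v = τ • v)
    (hτmin : ∀ (μ : ℝ) (v : Fin n → ℝ), v ≠ 0 → A.mulVec v = μ • v → τ ≤ μ)
    (hkτ : τ < k)
    (S : Finset (Fin n)) (hind : ∀ i ∈ S, ∀ j ∈ S, i ≠ j → A i j = 0)
    (s s₁ : ℕ) (hs : s = S.card)
    (hs₁ : (s₁ : ℝ) = ∑ i ∈ S, A i i) :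
    (s : ℝ) ≤ n * (-τ + Real.sqrt (τ ^ 2 + 4 * s₁ * ((k : ℝ) - τ) / n))
      / (2 * ((k : ℝ) - τ)) := by
  have hn' : (0:ℝ) < n := by exact_mod_cast hn
  -- A is Hermitian
  have hAH : A.IsHermitian := by
    ext i j
    simp only [conjTranspose_apply, star_trivial]
    exact hsym.apply i j
  -- B := A - τ • 1 is positive semidefinite
  have hBH : (A - τ • (1 : Matrix (Fin n) (Fin n) ℝ)).IsHermitian := by
    ext i j
    simp only [conjTranspose_apply, star_trivial, Matrix.sub_apply, Matrix.smul_apply, one_apply, smul_eq_mul]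
    rw [hsym.apply i j]
    by_cases h : j = i
    · simp [h]
    · simp [h, show ¬ i = j from fun hh => h hh.symm]
  have hPSD : (A - τ • (1 : Matrix (Fin n) (Fin n) ℝ)).PosSemidef := by
    apply hBH.posSemidef_iff_eigenvalues_nonneg.mpr
    intro i
    have hv := hBH.mulVec_eigenvectorBasis i
    have hvne : (⇑(hBH.eigenvectorBasis i) : Fin n → ℝ) ≠ 0 :=
      (WithLp.ofLp_eq_zero 2).ne.2 <| hBH.eigenvectorBasis.orthonormal.ne_zero i
    set v : Fin n → ℝ := ⇑(hBH.eigenvectorBasis i) with hvdef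
    have hAv : A.mulVec v = (hBH.eigenvalues i + τ) • v := by
      have h1 : (A - τ • (1 : Matrix (Fin n) (Fin n) ℝ)).mulVec v
          = A.mulVec v - τ • v := by
        rw [sub_mulVec, smul_mulVec, one_mulVec]
      rw [h1, sub_eq_iff_eq_add] at hv
      rw [hv, add_smul]
    have := hτmin _ v hvne hAv
    exact (by linarith : (0:ℝ) ≤ hBH.eigenvalues i)
  -- the test vector
  set c : ℝ := (s : ℝ) / n with hc
  set u : Fin n → ℝ := fun i => if i ∈ S then 1 else 0 with hu
  set x : Fin n → ℝ := fun i => u i - c with hx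
  -- basic sums
  have hsumu : ∑ i, u i = (s : ℝ) := by
    simp [hu, hs]
  have hcol : ∀ j, ∑ i, A i j = (k : ℝ) := by
    intro j
    rw [← hreg j]
    exact Finset.sum_congr rfl fun i _ => hsym.apply j i
  have hrowS : ∀ i, ∑ j, A i j * u j = ∑ j ∈ S, A i j := by
    intro i
    simp [hu, mul_ite, Finset.sum_ite_mem]
  have hdiag : ∑ i ∈ S, ∑ j ∈ S, A i j = (s₁ : ℝ) := by
    rw [hs₁]
    refine Finset.sum_congr rfl fun i hi => ?_
    exact Finset.sum_eq_single_of_mem i hi fun j hj hji =>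
      hind i hi j hj (fun h => hji (h.symm))
  have hswap : ∑ i, ∑ j ∈ S, A i j = (k : ℝ) * s := by
    rw [Finset.sum_comm (f := fun i j => A i j), Finset.sum_congr rfl fun j _ => hcol j, Finset.sum_const, hs,
      nsmul_eq_mul, mul_comm]
  -- quadratic form values
  have hQA : x ⬝ᵥ A.mulVec x = (s₁ : ℝ) - 2 * c * k * s + n * c ^ 2 * k := by
    have hinner : ∀ i, (A.mulVec x) i = (∑ j ∈ S, A i j) - c * k := by
      intro i
      simp only [mulVec, dotProduct, hx]
      rw [Finset.sum_congr rfl fun j _ => show A i j * (u j - c) = A i j * u j - A i j * c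
        from by ring]
      rw [Finset.sum_sub_distrib, ← Finset.sum_mul, hreg i, hrowS i]
      ring
    simp only [dotProduct]
    rw [Finset.sum_congr rfl fun i _ => by rw [hinner i]]
    have expand : ∀ i, x i * ((∑ j ∈ S, A i j) - c * k)
        = u i * (∑ j ∈ S, A i j) - c * (∑ j ∈ S, A i j) - c * k * u i + c * (c * k) := by
      intro i; simp only [hx]; ring
    rw [Finset.sum_congr rfl fun i _ => expand i]
    have husum : ∑ i, u i * (∑ j ∈ S, A i j) = (s₁ : ℝ) := by
      rw [← hdiag]
      rw [show (∑ i, u i * (∑ j ∈ S, A i j)) = ∑ i, (if i ∈ S then (∑ j ∈ S, A i j) else 0)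
        from Finset.sum_congr rfl fun i _ => by simp [hu, ite_mul]]
      simp [Finset.sum_ite_mem]
    simp only [Finset.sum_add_distrib, Finset.sum_sub_distrib, husum, ← Finset.mul_sum,
      hswap, hsumu, Finset.sum_const, Finset.card_univ, Fintype.card_fin, nsmul_eq_mul]
    ring
  have hQ2 : x ⬝ᵥ x = (s : ℝ) - 2 * c * s + n * c ^ 2 := by
    simp only [dotProduct, hx]
    rw [Finset.sum_congr rfl fun i _ => show (u i - c) * (u i - c)
      = u i * u i - 2 * c * u i + c ^ 2 from by ring]
    have hu2 : ∑ i, u i * u i = (s : ℝ) := by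
      simp [hu, hs, ite_mul]
    simp only [Finset.sum_add_distrib, Finset.sum_sub_distrib, hu2, ← Finset.mul_sum, hsumu,
      Finset.sum_const, Finset.card_univ, Fintype.card_fin, nsmul_eq_mul]
  -- the PSD inequality
  have hineq : τ * (x ⬝ᵥ x) ≤ x ⬝ᵥ A.mulVec x := by
    have h := hPSD.dotProduct_mulVec_nonneg x
    simp only [star_trivial] at h
    rw [sub_mulVec, smul_mulVec, one_mulVec, dotProduct_sub, dotProduct_smul,
      smul_eq_mul] at h
    linarith
  rw [hQA, hQ2] at hineq
  have hnc : (n : ℝ) * c = s := by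
    rw [hc]; field_simp
  -- key quadratic inequality: a s² + τ s ≤ s₁ with a = (k-τ)/n
  set a : ℝ := ((k : ℝ) - τ) / n with ha
  have hapos : 0 < a := div_pos (by linarith) hn'
  have hna : (n : ℝ) * a = (k : ℝ) - τ := by
    rw [ha]; field_simp
  have key : a * (s : ℝ) ^ 2 + τ * s ≤ (s₁ : ℝ) := by
    have hcs2 : (n : ℝ) * c ^ 2 = c * s := by
      rw [pow_two, ← mul_assoc, hnc]; ring
    have hcsa : c * (s : ℝ) * ((k:ℝ) - τ) = (n : ℝ) * a * (c * s) := by rw [hna]; ring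
    have hcsn : (n : ℝ) * (c * s) = (s : ℝ) ^ 2 := by
      rw [show (n:ℝ) * (c * s) = ((n:ℝ) * c) * s from by ring, hnc]; ring
    nlinarith [hineq, hcs2, hna, hcsn]
  -- solve the quadratic inequality
  have hs0 : (0:ℝ) ≤ s := Nat.cast_nonneg s
  have h1 : (2 * a * s + τ) ^ 2 ≤ τ ^ 2 + 4 * a * s₁ := by nlinarith [key, hapos, hs0]
  have h2 : 2 * a * (s : ℝ) + τ ≤ Real.sqrt (τ ^ 2 + 4 * a * s₁) :=
    calc 2 * a * (s:ℝ) + τ ≤ |2 * a * s + τ| := le_abs_self _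
      _ = Real.sqrt ((2 * a * s + τ) ^ 2) := (Real.sqrt_sq_eq_abs _).symm
      _ ≤ _ := Real.sqrt_le_sqrt h1
  have harg : τ ^ 2 + 4 * (s₁:ℝ) * ((k : ℝ) - τ) / n = τ ^ 2 + 4 * a * s₁ := by
    rw [ha]; field_simp
  rw [harg, le_div_iff₀ (by linarith : (0:ℝ) < 2 * ((k : ℝ) - τ))]
  have hfin : (s : ℝ) * (2 * ((k:ℝ) - τ)) = (n:ℝ) * (2 * a * s) := by
    rw [← hna]; ring
  rw [hfin]
  have h2' : 2 * a * (s:ℝ) ≤ -τ + Real.sqrt (τ ^ 2 + 4 * a * s₁) := by linarith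
  calc (n:ℝ) * (2 * a * s) ≤ (n:ℝ) * (-τ + Real.sqrt (τ ^ 2 + 4 * a * s₁)) :=
        mul_le_mul_of_nonneg_left h2' hn'.le
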